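/- Let n ≥ 1, m ≥ 1, and α ≥ 0 be integers, and let K ⊆ {1, …, n} be a subset with n ∈ K and cardinality q = |K|. Then at every point z ∈ ℂⁿ ∖ {0}, Σ_{j∈K} ∂/∂z̄_j [ z̄_n^{mα} · (∏_{i∈K} z̄_i^{m-1}) · z̄_j · r_m(z)^{-(α+q)} ] = (α+q) · m · z̄_n^{mα} · (∏_{i∈K} z̄_i^{m-1}) · r_m(z)^{-(α+q+1)} · Σ_{ℓ∈{1,…,n}∖K} |z_ℓ|^{2m}. (This scalar identity is the coefficient computation behind the formula ∂̄ u_{α,m}(k₁,…,k_q) = m Σ_{ℓ=1}^{n-1} z_ℓ^m u_{α,m}(ℓ, k₁, …, k_q).) -/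

import Mathlib

open Complex

/-- The Wirtinger derivative `∂f/∂z̄ⱼ = (1/2)(∂f/∂xⱼ + i ∂f/∂yⱼ)` of a function
`f : ℂⁿ → ℂ` at `z` with respect to the `j`-th antiholomorphic coordinate, expressed via
the real Fréchet derivative. -/
noncomputable def wirtingerBar {n : ℕ} (f : (Fin n → ℂ) → ℂ) (z : Fin n → ℂ) (j : Fin n) : ℂ :=
  (1 / 2) * (fderiv ℝ f z (Pi.single j 1) + Complex.I * fderiv ℝ f z (Pi.single j Complex.I))

set_option linter.unusedSectionVars false

variable {ι : Type*} [Fintype ι] [DecidableEq ι]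

noncomputable def cP (i : ι) : ((ι → ℂ) →L[ℝ] ℂ) := ContinuousLinearMap.proj i
noncomputable def cJ (i : ι) : ((ι → ℂ) →L[ℝ] ℂ) :=
  Complex.conjCLE.toContinuousLinearMap.comp (cP i)

@[simp] lemma cP_apply (i : ι) (v : ι → ℂ) : cP i v = v i := rfl
@[simp] lemma cJ_apply (i : ι) (v : ι → ℂ) : cJ i v = starRingEnd ℂ (v i) := rfl

lemma hasFDerivAt_pow_apply (z : ι → ℂ) (i : ι) (k : ℕ) :
    HasFDerivAt (fun w : ι → ℂ => (w i) ^ k)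
      (((k : ℂ) * (z i) ^ (k - 1)) • cP i) z := by
  have h1 : HasFDerivAt (fun w : ι → ℂ => w i) (cP i) z := (cP i).hasFDerivAt
  have h2 := (hasDerivAt_pow k (z i)).comp_hasFDerivAt z h1
  simpa [Function.comp_def] using h2

lemma hasFDerivAt_conj_pow (z : ι → ℂ) (i : ι) (k : ℕ) :
    HasFDerivAt (fun w : ι → ℂ => (starRingEnd ℂ (w i)) ^ k)
      (((k : ℂ) * (starRingEnd ℂ (z i)) ^ (k - 1)) • cJ i) z := by
  have h1 : HasFDerivAt (fun w : ι → ℂ => starRingEnd ℂ (w i)) (cJ i) z := (cJ i).hasFDerivAt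
  have h2 := (hasDerivAt_pow k (starRingEnd ℂ (z i))).comp_hasFDerivAt z h1
  simpa [Function.comp_def] using h2

noncomputable def Rc (m : ℕ) (w : ι → ℂ) : ℂ :=
  ∑ i, (w i) ^ m * (starRingEnd ℂ (w i)) ^ m

lemma hasFDerivAt_Rc (m : ℕ) (z : ι → ℂ) :
    HasFDerivAt (Rc m)
      (∑ i : ι, ((z i) ^ m • (((m : ℂ) * (starRingEnd ℂ (z i)) ^ (m - 1)) • cJ i)
        + (starRingEnd ℂ (z i)) ^ m • (((m : ℂ) * (z i) ^ (m - 1)) • cP i))) z := by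
  have : ∀ i : ι, HasFDerivAt (fun w : ι → ℂ => (w i) ^ m * (starRingEnd ℂ (w i)) ^ m)
      ((z i) ^ m • (((m : ℂ) * (starRingEnd ℂ (z i)) ^ (m - 1)) • cJ i)
        + (starRingEnd ℂ (z i)) ^ m • (((m : ℂ) * (z i) ^ (m - 1)) • cP i)) z := fun i =>
    (hasFDerivAt_pow_apply z i m).mul (hasFDerivAt_conj_pow z i m)
  exact HasFDerivAt.fun_sum (fun i _ => this i)

lemma key {N : ℕ} (m : ℕ) (K : Finset (Fin N)) (e : Fin N → ℕ) (p : ℤ) (z : Fin N → ℂ)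
    (hR : Rc m z ≠ 0) (j : Fin N) (hj : j ∈ K) :
    wirtingerBar (fun w => (∏ i ∈ K, (starRingEnd ℂ (w i)) ^ e i) * (Rc m w) ^ p) z j =
      ((e j : ℂ) * (starRingEnd ℂ (z j)) ^ (e j - 1) *
          ∏ i ∈ K.erase j, (starRingEnd ℂ (z i)) ^ e i) * (Rc m z) ^ p
        + (∏ i ∈ K, (starRingEnd ℂ (z i)) ^ e i) * ((p : ℂ) * (Rc m z) ^ (p - 1)) *
            ((m : ℂ) * (z j) ^ m * (starRingEnd ℂ (z j)) ^ (m - 1)) := by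
  have hmon : HasFDerivAt (fun w : Fin N → ℂ => ∏ i ∈ K, (starRingEnd ℂ (w i)) ^ e i)
      (∑ i ∈ K, (∏ i' ∈ K.erase i, (starRingEnd ℂ (z i')) ^ e i') •
        (((e i : ℂ) * (starRingEnd ℂ (z i)) ^ (e i - 1)) • cJ i)) z :=
    HasFDerivAt.finset_prod (fun i _ => hasFDerivAt_conj_pow z i (e i))
  have hzp : HasFDerivAt (fun w : Fin N → ℂ => (Rc m w) ^ p)
      (((p : ℂ) * (Rc m z) ^ (p - 1)) •
        (∑ i : Fin N, ((z i) ^ m • (((m : ℂ) * (starRingEnd ℂ (z i)) ^ (m - 1)) • cJ i)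
          + (starRingEnd ℂ (z i)) ^ m • (((m : ℂ) * (z i) ^ (m - 1)) • cP i)))) z := by
    have := (hasDerivAt_zpow p (Rc m z) (Or.inl hR)).comp_hasFDerivAt z (hasFDerivAt_Rc m z)
    simpa [Function.comp_def] using this
  have hf : HasFDerivAt (fun w : Fin N → ℂ => (∏ i ∈ K, (starRingEnd ℂ (w i)) ^ e i) * (Rc m w) ^ p) _ z :=
    hmon.mul hzp
  set A : ℂ := (∏ i ∈ K, (starRingEnd ℂ (z i)) ^ e i) * ((p : ℂ) * (Rc m z) ^ (p - 1)) *
      ((starRingEnd ℂ (z j)) ^ m * ((m : ℂ) * (z j) ^ (m - 1))) with hA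
  set B : ℂ := (∏ i ∈ K, (starRingEnd ℂ (z i)) ^ e i) * ((p : ℂ) * (Rc m z) ^ (p - 1)) *
      ((z j) ^ m * ((m : ℂ) * (starRingEnd ℂ (z j)) ^ (m - 1)))
      + (Rc m z) ^ p * ((∏ i' ∈ K.erase j, (starRingEnd ℂ (z i')) ^ e i') *
          ((e j : ℂ) * (starRingEnd ℂ (z j)) ^ (e j - 1))) with hB
  have ev : ∀ v : ℂ, fderiv ℝ
      (fun w => (∏ i ∈ K, (starRingEnd ℂ (w i)) ^ e i) * (Rc m w) ^ p) z (Pi.single j v)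
      = A * v + B * starRingEnd ℂ v := by
    intro v
    rw [hf.fderiv]
    simp only [ContinuousLinearMap.add_apply, ContinuousLinearMap.coe_smul',
      ContinuousLinearMap.coe_sum', Pi.smul_apply, Finset.sum_apply, smul_eq_mul,
      ContinuousLinearMap.smul_apply, cP_apply, cJ_apply, Pi.single_apply,
      apply_ite (starRingEnd ℂ), map_zero, mul_ite, ite_mul, mul_zero, zero_mul, Finset.sum_add_distrib,
      Finset.sum_ite_eq', hj, if_true, Finset.mem_univ, hA, hB]
    ring
  simp only [wirtingerBar]
  rw [ev 1, ev Complex.I]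
  simp only [map_one, Complex.conj_I, mul_one]
  linear_combination ((A - B) / 2) * Complex.I_sq

lemma abs_pow_cast (m : ℕ) (x : ℂ) :
    ((‖x‖ ^ (2 * m) : ℝ) : ℂ) = x ^ m * starRingEnd ℂ x ^ m := by
  rw [pow_mul, Complex.sq_norm, ← mul_pow, Complex.mul_conj]
  push_cast
  ring

lemma cast_sum_eq (m : ℕ) (w : ι → ℂ) :
    (((∑ i, ‖w i‖ ^ (2 * m) : ℝ)) : ℂ) = Rc m w := by
  rw [Complex.ofReal_sum]
  exact Finset.sum_congr rfl fun i _ => abs_pow_cast m (w i)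

/-- For integers `m ≥ 1`, `α ≥ 0` and a subset `K` of the coordinates of
`ℂ^(n+1)` containing the last one, with `q = |K|`, at every `z ≠ 0`,
`∑_{j∈K} ∂/∂z̄_j [ z̄ₙ^{mα} (∏_{i∈K} z̄ᵢ^{m-1}) z̄ⱼ r_m(z)^{-(α+q)} ]
  = (α+q) m z̄ₙ^{mα} (∏_{i∈K} z̄ᵢ^{m-1}) r_m(z)^{-(α+q+1)} ∑_{ℓ∉K} |z_ℓ|^{2m}`,
where `r_m(z) = ∑ᵢ |zᵢ|^{2m}`. -/
theorem u_alpha_m_dbar_formula (n m α : ℕ) (hm : 1 ≤ m)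
    (K : Finset (Fin (n + 1))) (hK : Fin.last n ∈ K) :
    ∀ z : Fin (n + 1) → ℂ, z ≠ 0 →
      ∑ j ∈ K,
        wirtingerBar
          (fun w =>
            (starRingEnd ℂ (w (Fin.last n))) ^ (m * α) *
              (∏ i ∈ K, (starRingEnd ℂ (w i)) ^ (m - 1)) *
              starRingEnd ℂ (w j) *
              (((∑ i : Fin (n + 1), ‖w i‖ ^ (2 * m) : ℝ) : ℂ)) ^
                (-(α + K.card : ℤ)))
          z j
        = ((α + K.card : ℕ) : ℂ) * (m : ℂ) *
            (starRingEnd ℂ (z (Fin.last n))) ^ (m * α) *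
            (∏ i ∈ K, (starRingEnd ℂ (z i)) ^ (m - 1)) *
            (((∑ i : Fin (n + 1), ‖z i‖ ^ (2 * m) : ℝ) : ℂ)) ^
              (-(α + K.card + 1 : ℤ)) *
            ∑ ℓ ∈ Kᶜ, ((‖z ℓ‖ ^ (2 * m) : ℝ) : ℂ) := by
  intro z hz
  have hsum_pos : 0 < ∑ i : Fin (n + 1), ‖z i‖ ^ (2 * m) := by
    obtain ⟨i, hi⟩ := Function.ne_iff.mp hz
    refine Finset.sum_pos' (fun i _ => by positivity) ⟨i, Finset.mem_univ i, ?_⟩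
    have : ‖z i‖ > 0 := by simpa using hi
    positivity
  have hR : Rc m z ≠ 0 := by
    rw [← cast_sum_eq m z]
    exact_mod_cast hsum_pos.ne'
  set p : ℤ := -(α + K.card : ℤ) with hp
  set e : Fin (n + 1) → Fin (n + 1) → ℕ := fun j i =>
    (m - 1) + (if i = Fin.last n then m * α else 0) + (if i = j then 1 else 0) with he
  set g : Fin (n + 1) → ℂ := fun i =>
    (starRingEnd ℂ (z i)) ^ ((m - 1) + if i = Fin.last n then m * α else 0) with hg
  have hprodg : ∏ i ∈ K, g i =
      (starRingEnd ℂ (z (Fin.last n))) ^ (m * α) *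
        ∏ i ∈ K, (starRingEnd ℂ (z i)) ^ (m - 1) := by
    simp only [hg, pow_add, Finset.prod_mul_distrib, pow_ite, pow_zero,
      Finset.prod_ite_eq', hK, if_true]
    ring
  have step : ∀ j ∈ K,
      wirtingerBar
          (fun w =>
            (starRingEnd ℂ (w (Fin.last n))) ^ (m * α) *
              (∏ i ∈ K, (starRingEnd ℂ (w i)) ^ (m - 1)) *
              starRingEnd ℂ (w j) *
              (((∑ i : Fin (n + 1), ‖w i‖ ^ (2 * m) : ℝ) : ℂ)) ^ p)
          z j
        = ((m : ℂ) + if j = Fin.last n then (m * α : ℂ) else 0) *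
            ((∏ i ∈ K, g i) * (Rc m z) ^ p)
          + (∏ i ∈ K, g i) * ((p : ℂ) * (Rc m z) ^ (p - 1)) *
              ((m : ℂ) * (z j) ^ m * (starRingEnd ℂ (z j)) ^ m) := by
    intro j hj
    have hmono : ∀ w : Fin (n + 1) → ℂ,
        ∏ i ∈ K, (starRingEnd ℂ (w i)) ^ e j i =
          (starRingEnd ℂ (w (Fin.last n))) ^ (m * α) *
            (∏ i ∈ K, (starRingEnd ℂ (w i)) ^ (m - 1)) * starRingEnd ℂ (w j) := by
      intro w
      simp only [he, pow_add, Finset.prod_mul_distrib, pow_ite, pow_zero, pow_one,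
        Finset.prod_ite_eq', hK, hj, if_true]
      ring
    have hfun : (fun w : Fin (n + 1) → ℂ =>
          (starRingEnd ℂ (w (Fin.last n))) ^ (m * α) *
            (∏ i ∈ K, (starRingEnd ℂ (w i)) ^ (m - 1)) *
            starRingEnd ℂ (w j) *
            (((∑ i : Fin (n + 1), ‖w i‖ ^ (2 * m) : ℝ) : ℂ)) ^ p)
        = fun w => (∏ i ∈ K, (starRingEnd ℂ (w i)) ^ e j i) * (Rc m w) ^ p := by
      funext w
      rw [cast_sum_eq m w, hmono w]
    rw [hfun, key m K (e j) p z hR j hj]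
    -- (A) cast of e j j
    have hejj : e j j = m + (if j = Fin.last n then m * α else 0) := by
      by_cases hjl : j = Fin.last n <;> simp [he, hjl] <;> omega
    have hA : ((e j j : ℕ) : ℂ) = (m : ℂ) + if j = Fin.last n then (m * α : ℂ) else 0 := by
      rw [hejj]
      by_cases hjl : j = Fin.last n <;> simp [hjl] <;> push_cast <;> ring
    -- (B)
    have hB : (starRingEnd ℂ (z j)) ^ (e j j - 1) *
        ∏ i ∈ K.erase j, (starRingEnd ℂ (z i)) ^ e j i = ∏ i ∈ K, g i := by
      have h1 : ∀ i ∈ K.erase j, (starRingEnd ℂ (z i)) ^ e j i = g i := by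
        intro i hi
        have hij : i ≠ j := Finset.ne_of_mem_erase hi
        simp [he, hg, hij]
      rw [Finset.prod_congr rfl h1]
      have h2 : (starRingEnd ℂ (z j)) ^ (e j j - 1) = g j := by
        rw [hg]
        congr 1
        rw [hejj]
        omega
      rw [h2, Finset.mul_prod_erase K g hj]
    -- (C)
    have hC : ∏ i ∈ K, (starRingEnd ℂ (z i)) ^ e j i =
        (∏ i ∈ K, g i) * starRingEnd ℂ (z j) := by
      rw [hmono z, hprodg]
    have hD : starRingEnd ℂ (z j) ^ (m - 1) * starRingEnd ℂ (z j) =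
        starRingEnd ℂ (z j) ^ m := by
      rw [← pow_succ, Nat.sub_add_cancel hm]
    rw [hC, hA]
    rw [mul_assoc ((m : ℂ) + if j = Fin.last n then (m * α : ℂ) else 0), hB]
    linear_combination ((∏ i ∈ K, g i) * ((p : ℂ) * (Rc m z) ^ (p - 1)) *
      ((m : ℂ) * (z j) ^ m)) * hD
  rw [Finset.sum_congr rfl step]
  -- split the sum
  rw [Finset.sum_add_distrib]
  have hsum1 : (∑ j ∈ K, ((m : ℂ) + if j = Fin.last n then (m * α : ℂ) else 0) *
      ((∏ i ∈ K, g i) * (Rc m z) ^ p))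
      = ((K.card : ℂ) * m + m * α) * ((∏ i ∈ K, g i) * (Rc m z) ^ p) := by
    rw [← Finset.sum_mul]
    congr 1
    rw [Finset.sum_add_distrib, Finset.sum_const, Finset.sum_ite_eq' K (Fin.last n)
      (fun _ => (m * α : ℂ)), if_pos hK]
    simp [nsmul_eq_mul]
  have hsum2 : (∑ j ∈ K, (∏ i ∈ K, g i) * ((p : ℂ) * (Rc m z) ^ (p - 1)) *
      ((m : ℂ) * (z j) ^ m * (starRingEnd ℂ (z j)) ^ m))
      = (∏ i ∈ K, g i) * ((p : ℂ) * (Rc m z) ^ (p - 1)) * (m : ℂ) *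
          (∑ j ∈ K, (z j) ^ m * (starRingEnd ℂ (z j)) ^ m) := by
    rw [Finset.mul_sum]
    exact Finset.sum_congr rfl fun j _ => by ring
  rw [hsum1, hsum2]
  -- rewrite RHS
  rw [cast_sum_eq m z]
  have hexp : (-(α + K.card + 1 : ℤ)) = p - 1 := by rw [hp]; ring
  rw [hexp]
  have hcompl : (∑ ℓ ∈ Kᶜ, ((‖z ℓ‖ ^ (2 * m) : ℝ) : ℂ))
      = ∑ ℓ ∈ Kᶜ, (z ℓ) ^ m * (starRingEnd ℂ (z ℓ)) ^ m :=
    Finset.sum_congr rfl fun ℓ _ => abs_pow_cast m (z ℓ)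
  rw [hcompl]
  -- key identities
  have hsplit : (∑ j ∈ K, (z j) ^ m * (starRingEnd ℂ (z j)) ^ m) +
      (∑ ℓ ∈ Kᶜ, (z ℓ) ^ m * (starRingEnd ℂ (z ℓ)) ^ m) = Rc m z :=
    Finset.sum_add_sum_compl K _
  have hzp : (Rc m z) ^ p = (Rc m z) ^ (p - 1) * Rc m z := by
    conv_lhs => rw [show p = (p - 1) + 1 by ring, zpow_add_one₀ hR]
  have hpc : (p : ℂ) = -((α : ℂ) + (K.card : ℂ)) := by rw [hp]; push_cast; ring
  rw [hzp, hpc]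
  push_cast
  linear_combination (((α : ℂ) + (K.card : ℂ)) * (m : ℂ) * (Rc m z) ^ (p - 1) *
      (∑ ℓ ∈ Kᶜ, (z ℓ) ^ m * (starRingEnd ℂ) (z ℓ) ^ m)) * hprodg
    - (((K.card : ℂ) * m + (m : ℂ) * α) * (∏ i ∈ K, g i) * (Rc m z) ^ (p - 1)) * hsplit
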